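/- Two real quadratic irrationals have the same period in their '−' continued fraction expansions (up to cyclic permutation) if and only if they are equivalent under the action of PSL(2, ℤ) by Möbius transformations. -/

import Mathlib

open Function

/-- Iterates of the minus continued fraction algorithm. -/
noncomputable def mIter (x : ℝ) (n : ℕ) : ℝ := (fun y => ((⌈y⌉ : ℝ) - y)⁻¹)^[n] x

/-- The n-th partial quotient of the minus continued fraction of x. -/
noncomputable def mDigit (x : ℝ) (n : ℕ) : ℤ := ⌈mIter x n⌉

open Function


namespace MCF

lemma mIter_zero (x : ℝ) : mIter x 0 = x := rfl

lemma mIter_succ (x : ℝ) (n : ℕ) :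
    mIter x (n + 1) = ((mDigit x n : ℝ) - mIter x n)⁻¹ := by
  unfold mIter mDigit
  rw [Function.iterate_succ_apply']
  rfl

lemma mIter_add (x : ℝ) (m n : ℕ) : mIter x (m + n) = mIter (mIter x m) n := by
  unfold mIter
  rw [add_comm, Function.iterate_add_apply]

lemma irrational_mIter {x : ℝ} (hx : Irrational x) (n : ℕ) : Irrational (mIter x n) := by
  induction n with
  | zero => exact hx
  | succ n ih =>
      rw [mIter_succ]
      exact ((ih.intCast_sub _)).inv

lemma ceil_bounds {y : ℝ} (hy : Irrational y) : (⌈y⌉ : ℝ) - 1 < y ∧ y < ⌈y⌉ := by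
  constructor
  · linarith [Int.ceil_lt_add_one y]
  · have : y ≠ (⌈y⌉ : ℝ) := hy.ne_int ⌈y⌉
    exact lt_of_le_of_ne (Int.le_ceil y) this

lemma mIter_lt_digit {x : ℝ} (hx : Irrational x) (n : ℕ) :
    (mDigit x n : ℝ) - 1 < mIter x n ∧ mIter x n < (mDigit x n : ℝ) :=
  ceil_bounds (irrational_mIter hx n)

lemma digit_sub_ne {x : ℝ} (hx : Irrational x) (n : ℕ) :
    (mDigit x n : ℝ) - mIter x n ≠ 0 := by
  have := (mIter_lt_digit hx n).2
  linarith

lemma one_lt_mIter_succ {x : ℝ} (hx : Irrational x) (n : ℕ) : 1 < mIter x (n + 1) := by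
  rw [mIter_succ]
  have h1 := (mIter_lt_digit hx n).1
  have h2 := (mIter_lt_digit hx n).2
  have h3 : (0:ℝ) < (mDigit x n : ℝ) - mIter x n := by linarith
  rw [lt_inv_comm₀ one_pos h3]
  norm_num; linarith

lemma one_lt_mIter {x : ℝ} (hx : Irrational x) {n : ℕ} (hn : 1 ≤ n) : 1 < mIter x n := by
  obtain ⟨k, rfl⟩ := Nat.exists_eq_add_of_le hn
  rw [add_comm]
  exact one_lt_mIter_succ hx k

lemma two_le_mDigit {x : ℝ} (hx : Irrational x) {n : ℕ} (hn : 1 ≤ n) : 2 ≤ mDigit x n := by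
  have h := one_lt_mIter hx hn
  have : (1 : ℤ) < ⌈mIter x n⌉ := by
    rw [Int.lt_ceil]; exact_mod_cast h
  unfold mDigit; omega

lemma mIter_rec {x : ℝ} (hx : Irrational x) (n : ℕ) :
    mIter x n = (mDigit x n : ℝ) - (mIter x (n + 1))⁻¹ := by
  rw [mIter_succ, inv_inv]
  ring

lemma mIter_succ_ne_zero {x : ℝ} (hx : Irrational x) (n : ℕ) : mIter x (n + 1) ≠ 0 :=
  (irrational_mIter hx (n + 1)).ne_zero

end MCF

namespace MCF

/-- There are infinitely many digits ≥ 3. -/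
lemma exists_digit_ge_three {x : ℝ} (hx : Irrational x) (N : ℕ) :
    ∃ n, N < n ∧ 3 ≤ mDigit x n := by
  by_contra hcon
  push_neg at hcon
  have hdig : ∀ n, N < n → mDigit x n = 2 := by
    intro n hn
    have h1 := two_le_mDigit hx (Nat.one_le_iff_ne_zero.mpr (by omega) : 1 ≤ n)
    have h2 := hcon n hn
    omega
  -- u k := (mIter x (N+1+k) - 1)⁻¹ satisfies u (k+1) = u k - 1
  set u : ℕ → ℝ := fun k => (mIter x (N + 1 + k) - 1)⁻¹ with hu
  have hgt : ∀ k, 1 < mIter x (N + 1 + k) := fun k =>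
    one_lt_mIter hx (by omega)
  have hupos : ∀ k, 0 < u k := fun k => by
    have := hgt k
    simp only [hu]
    exact inv_pos.mpr (by linarith)
  have hstep : ∀ k, u (k + 1) = u k - 1 := by
    intro k
    have hrec : mIter x (N + 1 + (k+1)) = ((2 : ℝ) - mIter x (N + 1 + k))⁻¹ := by
      have : N + 1 + (k + 1) = (N + 1 + k) + 1 := by omega
      rw [this, mIter_succ, hdig (N + 1 + k) (by omega)]
      norm_num
    have h1 := hgt k
    have h2 : mIter x (N + 1 + k) < 2 := by
      have := (mIter_lt_digit hx (N + 1 + k)).2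
      rw [hdig (N + 1 + k) (by omega)] at this
      exact_mod_cast this
    set X := mIter x (N + 1 + k) with hX
    have hne : (2 : ℝ) - X ≠ 0 := by linarith
    have hne2 : X - 1 ≠ 0 := by linarith
    simp only [hu, hrec]
    have e1 : (2 - X)⁻¹ - 1 = (X - 1) / (2 - X) := by field_simp; ring
    have e2 : (X - 1)⁻¹ - 1 = (2 - X) / (X - 1) := by field_simp; ring
    rw [e1, inv_div, e2]
  have hformula : ∀ k, u k = u 0 - k := by
    intro k
    induction k with
    | zero => simp
    | succ k ih => rw [hstep k, ih]; push_cast; ring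
  obtain ⟨k, hk⟩ := exists_nat_gt (u 0)
  have := hupos k
  rw [hformula k] at this
  linarith

/-- Tail equivalence of minus continued fractions. -/
def E (x y : ℝ) : Prop := ∃ m n, mIter x m = mIter y n

lemma E.refl (x : ℝ) : E x x := ⟨0, 0, rfl⟩

lemma E.symm {x y : ℝ} (h : E x y) : E y x := by
  obtain ⟨m, n, h⟩ := h; exact ⟨n, m, h.symm⟩

lemma E.trans {x y z : ℝ} (h1 : E x y) (h2 : E y z) : E x z := by
  obtain ⟨m, n, h1⟩ := h1
  obtain ⟨n', k, h2⟩ := h2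
  rcases le_total n n' with h | h
  · refine ⟨m + (n' - n), k, ?_⟩
    rw [mIter_add, h1, ← mIter_add]
    rw [show n + (n' - n) = n' from by omega, h2]
  · refine ⟨m, k + (n - n'), ?_⟩
    rw [mIter_add, ← h2, ← mIter_add]
    rw [show n' + (n - n') = n from by omega, h1]

lemma E_mIter (x : ℝ) (n : ℕ) : E (mIter x n) x := ⟨0, n, rfl⟩

lemma E_add_int (x : ℝ) (k : ℤ) : E (x + k) x := by
  refine ⟨1, 1, ?_⟩
  unfold mIter
  simp only [Function.iterate_one]
  rw [Int.ceil_add_intCast]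
  push_cast
  ring_nf

end MCF

namespace MCF

/-- For x > 1, the first iterate of -1/x is x itself. -/
lemma mIter_neg_inv_one {x : ℝ} (hx : Irrational x) (h1 : 1 < x) :
    mIter (-x⁻¹) 1 = x := by
  have hx0 : (0:ℝ) < x := by linarith
  have hi1 : (0:ℝ) < x⁻¹ := by positivity
  have hi2 : x⁻¹ < 1 := by rw [inv_lt_one_iff₀]; right; exact h1
  have hceil : ⌈-x⁻¹⌉ = 0 := by
    rw [Int.ceil_eq_zero_iff]
    simp only [Set.mem_Ioc, Int.cast_zero, zero_sub]
    constructor <;> linarith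
  unfold mIter
  simp only [Function.iterate_one]
  rw [hceil]
  push_cast
  rw [zero_sub, neg_neg, inv_inv]

lemma E_neg_inv_of_one_lt {x : ℝ} (hx : Irrational x) (h1 : 1 < x) : E (-x⁻¹) x :=
  ⟨1, 0, mIter_neg_inv_one hx h1⟩

/-- Main induction for x ∈ (0,1). -/
lemma E_neg_inv_of_mem_Ioo : ∀ n : ℕ, ∀ x : ℝ, Irrational x → 0 < x → x < 1 →
    x⁻¹ < n → E (-x⁻¹) x := by
  intro n
  induction n with
  | zero =>
      intro x _ hx0 _ hn
      exact absurd hn (by simp; positivity)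
  | succ n ih =>
      intro x hx hx0 hx1 hn
      set z := x / (1 - x) with hz
      have h1x : (0:ℝ) < 1 - x := by linarith
      have h1x_irr : Irrational (1 - x) := by simpa using hx.ratCast_sub 1
      have hinv_irr : Irrational (1 - x)⁻¹ := h1x_irr.inv
      have hz_eq : z = (1 - x)⁻¹ - 1 := by
        rw [hz]; field_simp; ring
      have hzirr : Irrational z := by
        rw [hz_eq]; simpa using hinv_irr.sub_ratCast 1
      have hzpos : 0 < z := by rw [hz]; positivity
      have hzinv : z⁻¹ = x⁻¹ - 1 := by
        rw [hz, inv_div]; field_simp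
      -- mIter x 1 = (1-x)⁻¹
      have hceil : ⌈x⌉ = 1 := by
        rw [Int.ceil_eq_iff]
        constructor <;> push_cast <;> linarith
      have hmi : mIter x 1 = (1 - x)⁻¹ := by
        unfold mIter
        simp only [Function.iterate_one]
        rw [hceil]; norm_num
      -- E z x
      have hEzx : E z x := by
        have h1 : E z (mIter x 1) := by
          rw [hmi, hz_eq]
          have h := E_add_int ((1 - x)⁻¹) (-1); push_cast at h; rwa [← sub_eq_add_neg] at h
        exact h1.trans (E_mIter x 1)
      -- E (-x⁻¹) (-z⁻¹)
      have hExz : E (-x⁻¹) (-z⁻¹) := by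
        have : -x⁻¹ = -z⁻¹ + ((-1 : ℤ) : ℝ) := by
          rw [hzinv]; push_cast; ring
        rw [this]
        exact E_add_int _ _
      -- E (-z⁻¹) z
      have hEz : E (-z⁻¹) z := by
        rcases lt_or_gt_of_ne hzirr.ne_one with hlt | hgt
        · refine ih z hzirr hzpos hlt ?_
          rw [hzinv]; push_cast at hn ⊢; linarith
        · exact E_neg_inv_of_one_lt hzirr hgt
      exact (hExz.trans hEz).trans hEzx

/-- Serret S-move: x and -1/x have the same minus-CF tail. -/
lemma E_neg_inv {x : ℝ} (hx : Irrational x) : E (-x⁻¹) x := by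
  have hIoo : ∀ y : ℝ, Irrational y → 0 < y → y < 1 → E (-y⁻¹) y := by
    intro y hy h0 h1
    obtain ⟨n, hn⟩ := exists_nat_gt (y⁻¹)
    exact E_neg_inv_of_mem_Ioo n y hy h0 h1 hn
  rcases lt_or_gt_of_ne hx.ne_one with hlt1 | hgt1
  · rcases lt_or_gt_of_ne hx.ne_zero with hneg | hpos
    · -- x < 0
      set x' := -x⁻¹ with hx'
      have hx'irr : Irrational x' := (hx.inv).neg
      have hmul : x * x⁻¹ = 1 := mul_inv_cancel₀ hx.ne_zero
      have hinvx' : -x'⁻¹ = x := by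
        rw [hx', inv_neg, inv_inv, neg_neg]
      rcases lt_or_gt_of_ne (hx.ne_int (-1) : x ≠ ((-1 : ℤ) : ℝ)) with hlt | hgt
      · -- x < -1, so x' ∈ (0,1)
        have h0 : 0 < x' := by
          rw [hx']; simp only [neg_pos]
          exact inv_neg''.mpr hneg
        have hltx : x < -1 := by push_cast at hlt; linarith
        have h1 : x' < 1 := by
          rw [hx']
          nlinarith [hmul]
        have := hIoo x' hx'irr h0 h1
        rw [hinvx'] at this
        exact this.symm
      · -- -1 < x < 0, so x' > 1
        have hgtx : -1 < x := by push_cast at hgt; linarith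
        have hx1 : x⁻¹ < -1 := by nlinarith [hmul]
        have h1 : 1 < x' := by rw [hx']; linarith
        have : mIter (-x'⁻¹) 1 = x' := mIter_neg_inv_one hx'irr h1
        rw [hinvx'] at this
        exact ⟨0, 1, this.symm⟩
    · -- 0 < x < 1
      exact hIoo x hx hpos hlt1
  · exact E_neg_inv_of_one_lt hx hgt1

end MCF

namespace MCF

open Matrix ModularGroup
open scoped MatrixGroups

/-- Möbius action of SL(2,ℤ) on ℝ. -/
noncomputable def mb (g : SL(2, ℤ)) (x : ℝ) : ℝ :=
  ((g 0 0 : ℝ) * x + (g 0 1 : ℝ)) / ((g 1 0 : ℝ) * x + (g 1 1 : ℝ))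

lemma det_entries (g : SL(2, ℤ)) : g 0 0 * g 1 1 - g 0 1 * g 1 0 = 1 := by
  have := g.property
  rw [Matrix.det_fin_two] at this
  exact this

lemma denom_ne_zero {x : ℝ} (hx : Irrational x) (g : SL(2, ℤ)) :
    (g 1 0 : ℝ) * x + (g 1 1 : ℝ) ≠ 0 := by
  intro h
  rcases eq_or_ne (g 1 0) 0 with hc | hc
  · have hd := det_entries g
    rw [hc, mul_zero, sub_zero] at hd
    have : g 1 1 ≠ 0 := by rintro h11; rw [h11, mul_zero] at hd; exact one_ne_zero hd.symm
    rw [hc] at h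
    push_cast at h
    simp only [zero_mul, zero_add] at h
    exact this (by exact_mod_cast h)
  · have : x = ((-(g 1 1 : ℚ) / (g 1 0 : ℚ) : ℚ) : ℝ) := by
      have hc' : (g 1 0 : ℝ) ≠ 0 := by exact_mod_cast hc
      push_cast
      field_simp
      linarith [h]
    exact hx ⟨_, this.symm⟩

lemma irrational_mb {x : ℝ} (hx : Irrational x) (g : SL(2, ℤ)) : Irrational (mb g x) := by
  rintro ⟨q, hq⟩
  have hden := denom_ne_zero hx g
  have h : (q : ℝ) * ((g 1 0 : ℝ) * x + (g 1 1 : ℝ)) = (g 0 0 : ℝ) * x + (g 0 1 : ℝ) := by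
    rw [hq]
    unfold mb
    field_simp
    have hden' : x * (g 1 0 : ℝ) + (g 1 1 : ℝ) ≠ 0 := by rwa [mul_comm] at hden
    exact mul_div_cancel_right₀ _ hden'
  have h2 : ((q : ℝ) * (g 1 0 : ℝ) - (g 0 0 : ℝ)) * x = (g 0 1 : ℝ) - (q : ℝ) * (g 1 1 : ℝ) := by
    ring_nf
    ring_nf at h
    linarith [h]
  rcases eq_or_ne ((q : ℝ) * (g 1 0 : ℝ) - (g 0 0 : ℝ)) 0 with hz | hz
  · -- then also g01 = q g11, so det = 0
    rw [hz, zero_mul] at h2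
    have e1 : (g 0 0 : ℝ) = q * g 1 0 := by linarith [hz]
    have e2 : (g 0 1 : ℝ) = q * g 1 1 := by linarith [h2]
    have hd := det_entries g
    have : ((1:ℤ) : ℝ) = 0 := by
      rw [← hd]
      push_cast
      rw [e1, e2]
      ring
    norm_num at this
  · have : x = (((g 0 1 : ℚ) - q * (g 1 1 : ℚ)) / (q * (g 1 0 : ℚ) - (g 0 0 : ℚ)) : ℚ) := by
      have hz' : ((q * (g 1 0) - (g 0 0) : ℚ) : ℝ) ≠ 0 := by push_cast; exact hz
      push_cast
      rw [eq_div_iff (by push_cast at hz' ⊢; exact hz')]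
      linarith [h2]
    exact hx ⟨_, this.symm⟩

lemma mb_one (x : ℝ) : mb 1 x = x := by
  unfold mb
  simp [Matrix.SpecialLinearGroup.coe_one]

lemma mul_entry (g h : SL(2, ℤ)) (i j : Fin 2) :
    (g * h) i j = g i 0 * h 0 j + g i 1 * h 1 j := by
  have : (g * h) i j = ((g : Matrix (Fin 2) (Fin 2) ℤ) * (h : Matrix (Fin 2) (Fin 2) ℤ)) i j := rfl
  rw [this, Matrix.mul_apply, Fin.sum_univ_two]

lemma mb_mul {x : ℝ} (hx : Irrational x) (g h : SL(2, ℤ)) :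
    mb (g * h) x = mb g (mb h x) := by
  have hdh := denom_ne_zero hx h
  have hdg := denom_ne_zero (irrational_mb hx h) g
  have hdgh := denom_ne_zero hx (g * h)
  simp only [mb] at hdg hdgh ⊢
  simp only [mul_entry] at hdgh ⊢
  push_cast at hdgh ⊢
  rw [div_eq_div_iff hdgh hdg]
  field_simp
  ring

end MCF

namespace MCF

open Matrix ModularGroup
open scoped MatrixGroups

lemma mb_neg (g : SL(2, ℤ)) (x : ℝ) : mb (-g) x = mb g x := by
  unfold mb
  have h : ∀ i j : Fin 2, ((-g) i j : ℝ) = -(g i j : ℝ) := by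
    intro i j
    have : (-g) i j = -(g i j) := by
      show (-(g : Matrix (Fin 2) (Fin 2) ℤ)) i j = _
      simp
    rw [this]; push_cast; ring
  rw [h 0 0, h 0 1, h 1 0, h 1 1]
  rw [show -(g 0 0 : ℝ) * x + -(g 0 1 : ℝ) = -((g 0 0 : ℝ) * x + (g 0 1 : ℝ)) by ring,
      show -(g 1 0 : ℝ) * x + -(g 1 1 : ℝ) = -((g 1 0 : ℝ) * x + (g 1 1 : ℝ)) by ring,
      neg_div_neg_eq]

lemma S_entries : (S 0 0 : ℤ) = 0 ∧ S 0 1 = -1 ∧ S 1 0 = 1 ∧ S 1 1 = 0 := by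
  refine ⟨?_, ?_, ?_, ?_⟩ <;> rfl

lemma T_zpow_entries (m : ℤ) :
    (T ^ m) 0 0 = 1 ∧ (T ^ m) 0 1 = m ∧ (T ^ m) 1 0 = 0 ∧ (T ^ m) 1 1 = 1 := by
  have h := ModularGroup.coe_T_zpow m
  refine ⟨?_, ?_, ?_, ?_⟩ <;>
    · show (T ^ m).1 _ _ = _
      rw [h]
      simp

lemma mb_S {x : ℝ} (hx : Irrational x) : mb S x = -x⁻¹ := by
  unfold mb
  rw [S_entries.1, S_entries.2.1, S_entries.2.2.1, S_entries.2.2.2]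
  push_cast
  rw [zero_mul, zero_add, one_mul, add_zero]
  rw [div_eq_iff hx.ne_zero]
  rw [neg_mul, inv_mul_cancel₀ hx.ne_zero]

lemma mb_T_zpow (m : ℤ) (x : ℝ) : mb (T ^ m) x = x + m := by
  obtain ⟨h1, h2, h3, h4⟩ := T_zpow_entries m
  unfold mb
  rw [h1, h2, h3, h4]
  push_cast
  rw [one_mul, zero_mul, zero_add, div_one]

/-- Everybody in the SL(2,ℤ)-orbit of x has the same minus-CF tail as x. -/
lemma E_mb_aux : ∀ n : ℕ, ∀ g : SL(2, ℤ), (g 1 0).natAbs = n →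
    ∀ x : ℝ, Irrational x → E (mb g x) x := by
  intro n
  induction n using Nat.strong_induction_on with
  | _ n ih =>
    intro g hg x hx
    rcases eq_or_ne (g 1 0) 0 with hc | hc
    · -- lower-left zero: translation
      have hd := det_entries g
      rw [hc, mul_zero, sub_zero] at hd
      rcases Int.eq_one_or_neg_one_of_mul_eq_one' hd with ⟨h1, h2⟩ | ⟨h1, h2⟩
      · have heq : mb g x = x + ((g 0 1 : ℤ) : ℝ) := by
          unfold mb
          rw [hc, h1, h2]
          push_cast
          rw [div_eq_iff (by norm_num : (0:ℝ) * x + 1 ≠ 0)]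
          ring
        rw [heq]; exact E_add_int x _
      · have heq : mb g x = x + ((-(g 0 1) : ℤ) : ℝ) := by
          unfold mb
          rw [hc, h1, h2]
          push_cast
          rw [div_eq_iff (by norm_num : (0:ℝ) * x + (-1) ≠ 0)]
          ring
        rw [heq]; exact E_add_int x _
    · -- Euclidean step
      set c := g 1 0 with hcdef
      set a := g 0 0 with hadef
      set m := -(a / c) with hm
      have hrem : a + m * c = a % c := by
        rw [hm, Int.emod_def]; ring
      set g1 := T ^ m * g with hg1
      have hg1a : g1 0 0 = a + m * c := by
        rw [hg1, mul_entry]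
        obtain ⟨e1, e2, _, _⟩ := T_zpow_entries m
        rw [e1, e2, ← hadef, ← hcdef]
        ring
      set g2 := S * g1 with hg2
      have hg1e : g1 0 0 = a + m * c := hg1a
      have hg2c : g2 1 0 = a + m * c := by
        rw [hg2, mul_entry]
        rw [S_entries.2.2.1, S_entries.2.2.2, hg1a]
        ring
      have hlt : (g2 1 0).natAbs < n := by
        rw [hg2c, hrem, ← hg]
        have h1 : 0 ≤ a % c := Int.emod_nonneg a hc
        have h2 : a % c < |c| := Int.emod_lt_abs a hc
        rcases abs_choice c with habs | habs <;> omega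
      have hE2 : E (mb g2 x) x := ih _ hlt g2 rfl x hx
      have hirrg : Irrational (mb g x) := irrational_mb hx g
      have hirr1 : Irrational (mb g x + (m : ℝ)) := hirrg.add_intCast m
      have hmb2 : mb g2 x = -(mb g x + (m : ℝ))⁻¹ := by
        rw [hg2, mb_mul hx S g1, hg1, mb_mul hx (T ^ m) g, mb_T_zpow, mb_S hirr1]
      have hES : E (-(mb g x + (m : ℝ))⁻¹) (mb g x + (m : ℝ)) := E_neg_inv hirr1
      have hshift : E (mb g x + (m : ℝ)) (mb g x) := E_add_int _ _
      rw [hmb2] at hE2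
      exact (hshift.symm.trans hES.symm).trans hE2

lemma E_mb (g : SL(2, ℤ)) {x : ℝ} (hx : Irrational x) : E (mb g x) x :=
  E_mb_aux _ g rfl x hx

end MCF

namespace MCF

open Matrix
open scoped MatrixGroups

/-- The step matrix of the minus continued fraction. -/
def St (b : ℤ) : SL(2, ℤ) :=
  ⟨!![0, 1; -1, b], by norm_num [Matrix.det_fin_two_of]⟩

lemma mb_St {y : ℝ} (hy : Irrational y) (b : ℤ) : mb (St b) y = ((b : ℝ) - y)⁻¹ := by
  have h00 : (St b) 0 0 = 0 := rfl
  have h01 : (St b) 0 1 = 1 := rfl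
  have h10 : (St b) 1 0 = -1 := rfl
  have h11 : (St b) 1 1 = b := rfl
  unfold mb
  rw [h00, h01, h10, h11]
  push_cast
  rw [zero_mul, zero_add, inv_eq_one_div]
  ring_nf

/-- Every iterate is an SL(2,ℤ)-Möbius image of x. -/
lemma exists_mb_mIter {x : ℝ} (hx : Irrational x) (n : ℕ) :
    ∃ h : SL(2, ℤ), mIter x n = mb h x := by
  induction n with
  | zero => exact ⟨1, (mb_one x).symm⟩
  | succ n ih =>
      obtain ⟨h, hh⟩ := ih
      refine ⟨St (mDigit x n) * h, ?_⟩
      rw [mb_mul hx, ← hh, mIter_succ, mb_St (irrational_mIter hx n)]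

/-- x is an SL(2,ℤ)-Möbius image of each of its iterates. -/
lemma exists_mb_mIter' {x : ℝ} (hx : Irrational x) (n : ℕ) :
    ∃ h : SL(2, ℤ), x = mb h (mIter x n) := by
  obtain ⟨h, hh⟩ := exists_mb_mIter hx n
  refine ⟨h⁻¹, ?_⟩
  rw [hh, ← mb_mul hx, inv_mul_cancel, mb_one]

/-- Equal digit sequences force equal values. -/
lemma eq_of_digits_eq {x y : ℝ} (hx : Irrational x) (hy : Irrational y)
    (h : ∀ i, mDigit x i = mDigit y i) : x = y := by
  -- telescoping product
  set P : ℕ → ℝ := fun n => ∏ k ∈ Finset.range n, (mIter x (k+1) * mIter y (k+1)) with hP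
  have hfac : ∀ k, 1 < mIter x (k+1) * mIter y (k+1) := by
    intro k
    have h1 := one_lt_mIter_succ hx k
    have h2 := one_lt_mIter_succ hy k
    nlinarith
  have hPpos : ∀ n, 0 < P n := by
    intro n
    apply Finset.prod_pos
    intro k _
    linarith [hfac k]
  have hP1 : ∀ n, 1 ≤ P n := by
    intro n
    simp only [hP]
    have := Finset.prod_le_prod (s := Finset.range n) (f := fun _ => (1:ℝ))
      (g := fun k => mIter x (k+1) * mIter y (k+1))
      (fun i _ => zero_le_one) (fun i _ => (hfac i).le)
    simpa using this
  have htel : ∀ n, (x - y) * P n = mIter x n - mIter y n := by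
    intro n
    induction n with
    | zero => simp [hP, mIter_zero]
    | succ n ihn =>
        simp only [hP]
        rw [Finset.prod_range_succ]
        have hxr := mIter_rec hx n
        have hyr := mIter_rec hy n
        have hd : (mDigit x n : ℝ) = (mDigit y n : ℝ) := by exact_mod_cast h n
        have hxn := mIter_succ_ne_zero hx n
        have hyn := mIter_succ_ne_zero hy n
        have key : mIter x n - mIter y n =
            (mIter x (n+1) - mIter y (n+1)) / (mIter x (n+1) * mIter y (n+1)) := by
          rw [hxr, hyr, hd]
          field_simp
          ring
        rw [← mul_assoc, ihn, key]
        field_simp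
    -- bound on difference of iterates
  have hbnd : ∀ n, |mIter x n - mIter y n| ≤ 1 := by
    intro n
    have hx1 := (mIter_lt_digit hx n).1
    have hx2 := (mIter_lt_digit hx n).2
    have hy1 := (mIter_lt_digit hy n).1
    have hy2 := (mIter_lt_digit hy n).2
    have hd : (mDigit x n : ℝ) = (mDigit y n : ℝ) := by exact_mod_cast h n
    rw [abs_le]
    constructor <;> [linarith [hd ▸ hx1, hy2]; linarith [hx2, hd ▸ hy1]]
  -- the product is unbounded
  have hmono0 : ∀ a k, P a ≤ P (a + k) := by
    intro a k
    induction k with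
    | zero => simp
    | succ k ih =>
        have hsp : P (a + (k+1)) = P (a+k) * (mIter x (a+k+1) * mIter y (a+k+1)) := by
          rw [show a + (k+1) = (a+k)+1 by ring]
          simp only [hP]
          rw [Finset.prod_range_succ]
        rw [hsp]
        nlinarith [hfac (a+k), hPpos (a+k)]
  have hmono : ∀ a b', a ≤ b' → P a ≤ P b' := by
    intro a b' hab
    have := hmono0 a (b' - a)
    rwa [show a + (b' - a) = b' by omega] at this
  have hgrow : ∀ m : ℕ, ∃ n, (2:ℝ)^m ≤ P n := by
    intro m
    induction m with
    | zero => exact ⟨0, by simp [hP]⟩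
    | succ m ihm =>
        obtain ⟨n, hn⟩ := ihm
        obtain ⟨j, hjn, hj3⟩ := exists_digit_ge_three hx n
        have hj : j - 1 + 1 = j := by omega
        have hd3 : (3:ℝ) ≤ (mDigit x j : ℝ) := by exact_mod_cast hj3
        have hd3' : (3:ℝ) ≤ (mDigit y j : ℝ) := by
          have : (mDigit x j : ℝ) = (mDigit y j : ℝ) := by exact_mod_cast h j
          linarith
        have hxj : 2 < mIter x j := by linarith [(mIter_lt_digit hx j).1]
        have hyj : 2 < mIter y j := by linarith [(mIter_lt_digit hy j).1]
        have hsplit : P j = P (j-1) * (mIter x j * mIter y j) := by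
          conv_lhs => rw [← hj]
          simp only [hP]
          rw [Finset.prod_range_succ, hj]
        have hPn : P n ≤ P (j-1) := hmono n (j-1) (by omega)
        refine ⟨j, ?_⟩
        have hpos := hPpos (j - 1)
        have h4 : (4:ℝ) < mIter x j * mIter y j := by nlinarith
        calc (2:ℝ)^(m+1) = 2^m * 2 := by ring
        _ ≤ P (j-1) * 2 := by nlinarith
        _ ≤ P (j-1) * (mIter x j * mIter y j) := by nlinarith
        _ = P j := hsplit.symm
  by_contra hne
  have habs : 0 < |x - y| := abs_pos.mpr (sub_ne_zero.mpr hne)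
  obtain ⟨m, hm⟩ := pow_unbounded_of_one_lt (1/|x-y|) (one_lt_two)
  obtain ⟨n, hn⟩ := hgrow m
  have h1 : |x - y| * P n ≤ 1 := by
    calc |x-y| * P n = |(x-y) * P n| := by rw [abs_mul, abs_of_pos (hPpos n)]
    _ = |mIter x n - mIter y n| := by rw [htel n]
    _ ≤ 1 := hbnd n
  have h2 : 1 < |x - y| * (2:ℝ)^m := by
    rw [div_lt_iff₀ habs] at hm
    linarith [hm]
  have h3 : |x - y| * (2:ℝ)^m ≤ |x - y| * P n := by
    apply mul_le_mul_of_nonneg_left hn (le_of_lt habs)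
  linarith

end MCF

namespace MCF

/-- Integer quadratic coefficients along the minus-CF orbit. -/
noncomputable def qA (x : ℝ) (a b c : ℤ) : ℕ → ℤ × ℤ × ℤ
  | 0 => (a, b, c)
  | n+1 =>
      let p := qA x a b c n
      (p.1 * (mDigit x n)^2 + p.2.1 * (mDigit x n) + p.2.2,
       -(2 * p.1 * (mDigit x n) + p.2.1), p.1)

/-- The conjugate root. -/
noncomputable def tc (x : ℝ) (a b c : ℤ) (n : ℕ) : ℝ :=
  -(((qA x a b c n).2.1 : ℝ) / ((qA x a b c n).1 : ℝ)) - mIter x n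

variable {x : ℝ} {a b c : ℤ}

lemma qA_zero : qA x a b c 0 = (a, b, c) := rfl

lemma qA_succ (n : ℕ) : qA x a b c (n+1) =
    ((qA x a b c n).1 * (mDigit x n)^2 + (qA x a b c n).2.1 * (mDigit x n) + (qA x a b c n).2.2,
     -(2 * (qA x a b c n).1 * (mDigit x n) + (qA x a b c n).2.1), (qA x a b c n).1) := rfl

/-- Discriminant invariance. -/
lemma qA_disc (n : ℕ) :
    (qA x a b c n).2.1 ^ 2 - 4 * (qA x a b c n).1 * (qA x a b c n).2.2 = b^2 - 4*a*c := by
  induction n with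
  | zero => rfl
  | succ n ih => rw [qA_succ]; dsimp only; rw [← ih]; ring

section Invariant

variable (hx : Irrational x) (ha : a ≠ 0)
  (hroot : (a : ℝ) * x^2 + (b : ℝ) * x + (c : ℝ) = 0)
include hx ha hroot

lemma qA_spec : ∀ n : ℕ, (qA x a b c n).1 ≠ 0 ∧
    ((qA x a b c n).1 : ℝ) * (mIter x n)^2 + ((qA x a b c n).2.1 : ℝ) * mIter x n
      + ((qA x a b c n).2.2 : ℝ) = 0 := by
  intro n
  induction n with
  | zero => exact ⟨ha, by rw [qA_zero]; exact hroot⟩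
  | succ n ih =>
      obtain ⟨hA, hr⟩ := ih
      set A := (qA x a b c n).1 with hAdef
      set B := (qA x a b c n).2.1 with hBdef
      set C := (qA x a b c n).2.2 with hCdef
      set X := mIter x n with hXdef
      set d := mDigit x n with hddef
      set X' := mIter x (n+1) with hX'def
      have hXirr : Irrational X := irrational_mIter hx n
      have hne : X' ≠ 0 := mIter_succ_ne_zero hx n
      have hXeq : X = (d : ℝ) - X'⁻¹ := mIter_rec hx n
      have hAne : (A : ℝ) ≠ 0 := Int.cast_ne_zero.mpr hA
      -- the conjugate root
      set t : ℝ := -((B:ℝ)/(A:ℝ)) - X with htdef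
      have hB : (B : ℝ) = -(A:ℝ) * (X + t) := by
        rw [htdef]; field_simp; ring
      have hC : (C : ℝ) = (A:ℝ) * X * t := by
        have : (C : ℝ) = -((A:ℝ) * X^2) - (B:ℝ) * X := by linarith [hr]
        rw [this, hB]; ring
      have htirr : Irrational t := by
        have hq : -((B:ℝ)/(A:ℝ)) = ((-(B:ℚ)/(A:ℚ) : ℚ) : ℝ) := by push_cast; ring
        rw [htdef, hq]
        exact hXirr.ratCast_sub _
      have hdX : (d:ℝ) - X ≠ 0 := digit_sub_ne hx n
      have hdt : (d:ℝ) - t ≠ 0 := sub_ne_zero.mpr (fun h => (htirr.ne_int d) h.symm)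
      constructor
      · -- A(n+1) ≠ 0
        rw [qA_succ]
        dsimp only
        rw [← hAdef, ← hBdef, ← hCdef, ← hddef]
        have hfac : ((A * d^2 + B * d + C : ℤ) : ℝ) = (A:ℝ) * ((d:ℝ) - X) * ((d:ℝ) - t) := by
          push_cast
          rw [hB, hC]
          ring
        intro hzero
        rw [hzero] at hfac
        push_cast at hfac
        exact (mul_ne_zero (mul_ne_zero hAne hdX) hdt) hfac.symm
      · -- root equation at n+1
        rw [qA_succ]
        dsimp only
        rw [← hAdef, ← hBdef, ← hCdef, ← hddef]
        have key : ((A * d^2 + B * d + C : ℤ) : ℝ) * X'^2 + ((-(2*A*d + B) : ℤ) : ℝ) * X' + (A:ℝ)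
            = ((A:ℝ) * X^2 + (B:ℝ) * X + (C:ℝ)) * X'^2 := by
          rw [hXeq]
          push_cast
          field_simp
          ring
        rw [key, hr, zero_mul]

lemma qA_fst_ne_zero (n : ℕ) : (qA x a b c n).1 ≠ 0 := (qA_spec hx ha hroot n).1

lemma tc_irrational (n : ℕ) : Irrational (tc x a b c n) := by
  have hq : -(((qA x a b c n).2.1 : ℝ)/((qA x a b c n).1 : ℝ))
      = ((-((qA x a b c n).2.1:ℚ)/((qA x a b c n).1:ℚ) : ℚ) : ℝ) := by push_cast; ring
  unfold tc
  rw [hq]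
  exact (irrational_mIter hx n).ratCast_sub _

lemma qA_B_eq (n : ℕ) : ((qA x a b c n).2.1 : ℝ)
    = -((qA x a b c n).1 : ℝ) * (mIter x n + tc x a b c n) := by
  have hAne : ((qA x a b c n).1 : ℝ) ≠ 0 := Int.cast_ne_zero.mpr (qA_fst_ne_zero hx ha hroot n)
  unfold tc
  field_simp
  ring

lemma qA_C_eq (n : ℕ) : ((qA x a b c n).2.2 : ℝ)
    = ((qA x a b c n).1 : ℝ) * mIter x n * tc x a b c n := by
  have hr := (qA_spec hx ha hroot n).2
  have hB := qA_B_eq hx ha hroot n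
  have : ((qA x a b c n).2.2 : ℝ) = -(((qA x a b c n).1:ℝ) * (mIter x n)^2)
      - ((qA x a b c n).2.1:ℝ) * mIter x n := by linarith [hr]
  rw [this, hB]; ring

/-- The conjugate root recurrence. -/
lemma tc_rec (n : ℕ) :
    tc x a b c (n+1) = ((mDigit x n : ℝ) - tc x a b c n)⁻¹ := by
  have hAne : ((qA x a b c n).1 : ℝ) ≠ 0 := Int.cast_ne_zero.mpr (qA_fst_ne_zero hx ha hroot n)
  have hAne' : ((qA x a b c (n+1)).1 : ℝ) ≠ 0 :=
    Int.cast_ne_zero.mpr (qA_fst_ne_zero hx ha hroot (n+1))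
  have hB := qA_B_eq hx ha hroot n
  have hC := qA_C_eq hx ha hroot n
  have htirr := tc_irrational hx ha hroot n
  have hdt : (mDigit x n : ℝ) - tc x a b c n ≠ 0 :=
    sub_ne_zero.mpr (fun h => (htirr.ne_int _) h.symm)
  have hdX : (mDigit x n : ℝ) - mIter x n ≠ 0 := digit_sub_ne hx n
  -- A(n+1) as a product
  have hfacA : ((qA x a b c (n+1)).1 : ℝ)
      = ((qA x a b c n).1:ℝ) * ((mDigit x n:ℝ) - mIter x n) * ((mDigit x n:ℝ) - tc x a b c n) := by
    rw [qA_succ]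
    dsimp only
    push_cast
    rw [hB, hC]
    ring
  have hfacB : ((qA x a b c (n+1)).2.1 : ℝ)
      = -(((qA x a b c n).1:ℝ) * (((mDigit x n:ℝ) - mIter x n) + ((mDigit x n:ℝ) - tc x a b c n))) := by
    rw [qA_succ]
    dsimp only
    push_cast
    rw [hB]
    ring
  have hXs : mIter x (n+1) = ((mDigit x n : ℝ) - mIter x n)⁻¹ := mIter_succ x n
  have ht' : tc x a b c (n+1)
      = -(((qA x a b c (n+1)).2.1:ℝ)/((qA x a b c (n+1)).1:ℝ)) - mIter x (n+1) := rfl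
  rw [ht', hfacA, hfacB, hXs]
  field_simp
  ring

end Invariant

end MCF

namespace MCF

variable {x : ℝ} {a b c : ℤ}

section Lagrange

variable (hx : Irrational x) (ha : a ≠ 0)
  (hroot : (a : ℝ) * x^2 + (b : ℝ) * x + (c : ℝ) = 0)
include hx ha hroot

lemma tc_ne (n : ℕ) : mIter x n - tc x a b c n ≠ 0 := by
  intro h
  have hAne : ((qA x a b c n).1 : ℝ) ≠ 0 := Int.cast_ne_zero.mpr (qA_fst_ne_zero hx ha hroot n)
  have hB := qA_B_eq hx ha hroot n
  have ht : tc x a b c n = mIter x n := by linarith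
  rw [ht] at hB
  -- B = -2 A X, so X rational
  apply irrational_mIter hx n
  refine ⟨(-(qA x a b c n).2.1 / (2 * (qA x a b c n).1) : ℚ), ?_⟩
  push_cast
  rw [div_eq_iff (by simpa using hAne : 2 * ((qA x a b c n).1:ℝ) ≠ 0)]
  linarith [hB]

/-- Gap recurrence. -/
lemma gap_rec (n : ℕ) :
    mIter x (n+1) - tc x a b c (n+1)
      = (mIter x n - tc x a b c n) * (mIter x (n+1) * tc x a b c (n+1)) := by
  have hdX : (mDigit x n : ℝ) - mIter x n ≠ 0 := digit_sub_ne hx n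
  have htirr := tc_irrational hx ha hroot n
  have hdt : (mDigit x n : ℝ) - tc x a b c n ≠ 0 :=
    sub_ne_zero.mpr (fun h => (htirr.ne_int _) h.symm)
  rw [tc_rec hx ha hroot n, mIter_succ]
  field_simp
  ring

/-- Eventually the conjugate lies in (0,1). -/
lemma eventually_reduced : ∃ K : ℕ, ∀ k : ℕ,
    0 < tc x a b c (K + 1 + k) ∧ tc x a b c (K + 1 + k) < 1 := by
  have hd2 : ∀ n : ℕ, (2:ℝ) ≤ (mDigit x (n+1) : ℝ) := by
    intro n
    exact_mod_cast two_le_mDigit hx (Nat.le_add_left 1 n)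
  have htne1 : ∀ n, tc x a b c n ≠ 1 := fun n => (tc_irrational hx ha hroot n).ne_one
  have step_lt1 : ∀ n : ℕ, tc x a b c (n+1) < 1 →
      0 < tc x a b c (n+2) ∧ tc x a b c (n+2) < 1 := by
    intro n hlt
    have hrec : tc x a b c (n+2) = ((mDigit x (n+1) : ℝ) - tc x a b c (n+1))⁻¹ :=
      tc_rec hx ha hroot (n+1)
    have h2 := hd2 n
    have hden : 1 < (mDigit x (n+1) : ℝ) - tc x a b c (n+1) := by linarith
    constructor
    · rw [hrec]; positivity
    · rw [hrec]; rw [inv_lt_one_iff₀]; right; exact hden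
  -- it suffices to find one reduced index
  have main : ∃ K : ℕ, 0 < tc x a b c (K+1) ∧ tc x a b c (K+1) < 1 := by
    by_contra hbad
    push_neg at hbad
    -- everywhere bad: t > 1 for all indices ≥ 1
    have hgt1 : ∀ n : ℕ, 1 < tc x a b c (n+1) := by
      intro n
      rcases lt_or_gt_of_ne (htne1 (n+1)) with hlt | hgt
      · exfalso
        obtain ⟨h1, h2⟩ := step_lt1 n hlt
        exact absurd h2 (by simpa using hbad (n+1) h1)
      · exact hgt
    have hltd : ∀ n : ℕ, tc x a b c (n+1) < (mDigit x (n+1) : ℝ) := by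
      intro n
      have hne : tc x a b c (n+1) ≠ (mDigit x (n+1) : ℝ) :=
        (tc_irrational hx ha hroot (n+1)).ne_int _
      rcases lt_or_gt_of_ne hne with hlt | hgt
      · exact hlt
      · exfalso
        have hrec : tc x a b c (n+2) = ((mDigit x (n+1) : ℝ) - tc x a b c (n+1))⁻¹ :=
          tc_rec hx ha hroot (n+1)
        have : tc x a b c (n+2) < 0 := by
          rw [hrec]
          apply inv_neg''.mpr
          linarith
        linarith [hgt1 (n+1)]
    -- both roots in the unit interval below the digit
    have hgap_lt : ∀ n : ℕ, |mIter x (n+1) - tc x a b c (n+1)| < 1 := by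
      intro n
      have hX1 := (mIter_lt_digit hx (n+1)).1
      have hX2 := (mIter_lt_digit hx (n+1)).2
      have ht_gt : (mDigit x (n+1) : ℝ) - 1 < tc x a b c (n+1) := by
        have hrec : tc x a b c (n+2) = ((mDigit x (n+1) : ℝ) - tc x a b c (n+1))⁻¹ :=
          tc_rec hx ha hroot (n+1)
        have hpos : 0 < (mDigit x (n+1) : ℝ) - tc x a b c (n+1) := by linarith [hltd n]
        have h1 : 1 < ((mDigit x (n+1) : ℝ) - tc x a b c (n+1))⁻¹ := by
          rw [← hrec]; exact hgt1 (n+1)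
        have : (mDigit x (n+1) : ℝ) - tc x a b c (n+1) < 1 := by
          by_contra hge
          push_neg at hge
          have := inv_le_one_of_one_le₀ hge
          linarith
        linarith
      rw [abs_lt]
      constructor <;> linarith [hltd n]
    -- gap grows without bound: contradiction
    set G : ℕ → ℝ := fun n => |mIter x n - tc x a b c n| with hG
    have hGpos : ∀ n, 0 < G n := fun n => abs_pos.mpr (tc_ne hx ha hroot n)
    have hGrec : ∀ n : ℕ, G (n+2) = G (n+1) * (mIter x (n+2) * tc x a b c (n+2)) := by
      intro n
      have := gap_rec hx ha hroot (n+1)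
      have hXpos : 0 < mIter x (n+2) := by linarith [one_lt_mIter_succ hx (n+1)]
      have htpos : 0 < tc x a b c (n+2) := by linarith [hgt1 (n+1)]
      simp only [hG]
      rw [this, abs_mul, abs_of_pos (by positivity : 0 < mIter x (n+2) * tc x a b c (n+2))]
    have hfac1 : ∀ n : ℕ, 1 < mIter x (n+2) * tc x a b c (n+2) := by
      intro n
      have h1 := one_lt_mIter_succ hx (n+1)
      have h2 := hgt1 (n+1)
      nlinarith
    have hmono : ∀ n k : ℕ, G (n+1) ≤ G (n+1+k) := by
      intro n k
      induction k with
      | zero => simp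
      | succ k ih =>
          have : n+1+(k+1) = (n+k)+2 := by omega
          rw [this, hGrec (n+k)]
          have h1 := hfac1 (n+k)
          have h2 := hGpos ((n+k)+1)
          have : n+1+k = (n+k)+1 := by omega
          rw [this] at ih
          nlinarith
    have hgrow : ∀ m : ℕ, ∃ n : ℕ, G 1 * 2^m ≤ G (n+1) := by
      intro m
      induction m with
      | zero => exact ⟨0, by simp⟩
      | succ m ihm =>
          obtain ⟨n, hn⟩ := ihm
          obtain ⟨j, hjn, hj3⟩ := exists_digit_ge_three hx (n+1)
          -- j ≥ n+2; j = (j-2)+2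
          have hj : (j-2)+2 = j := by omega
          have hd3 : (3:ℝ) ≤ (mDigit x ((j-2)+2) : ℝ) := by rw [hj]; exact_mod_cast hj3
          have hXj : 2 < mIter x ((j-2)+2) := by
            have := (mIter_lt_digit hx ((j-2)+2)).1
            linarith
          have htj : 1 < tc x a b c ((j-2)+2) := hgt1 ((j-2)+1)
          refine ⟨j - 1, ?_⟩
          have hstep := hGrec (j-2)
          have hmono' := hmono (n) (j-2-n)
          have hidx : n+1+(j-2-n) = (j-2)+1 := by omega
          rw [hidx] at hmono'
          have hfacj : 2 < mIter x ((j-2)+2) * tc x a b c ((j-2)+2) := by nlinarith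
          have hGj : G ((j-2)+2) ≥ G ((j-2)+1) * 2 := by
            rw [hstep]
            nlinarith [hGpos ((j-2)+1), hfacj]
          have : (j-1)+1 = (j-2)+2 := by omega
          rw [this]
          calc G 1 * 2^(m+1) = (G 1 * 2^m) * 2 := by ring
          _ ≤ G ((j-2)+1) * 2 := by nlinarith
          _ ≤ G ((j-2)+2) := hGj
    obtain ⟨m, hm⟩ := pow_unbounded_of_one_lt (1 / G 1) (one_lt_two : (1:ℝ) < 2)
    obtain ⟨n, hn⟩ := hgrow m
    have h1 : 1 < G 1 * 2^m := by
      rw [div_lt_iff₀ (hGpos 1)] at hm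
      linarith
    have := hgap_lt n
    simp only [hG] at hn
    linarith
  obtain ⟨K, hK⟩ := main
  refine ⟨K, ?_⟩
  intro k
  induction k with
  | zero => simpa using hK
  | succ k ih =>
      have : K + 1 + (k+1) = (K+k)+2 := by omega
      rw [this]
      have h' : K + 1 + k = (K+k)+1 := by omega
      rw [h'] at ih
      exact step_lt1 (K+k) ih.2

end Lagrange

end MCF

namespace MCF

variable {x : ℝ} {a b c : ℤ}

section Lagrange2

variable (hx : Irrational x) (ha : a ≠ 0)
  (hroot : (a : ℝ) * x^2 + (b : ℝ) * x + (c : ℝ) = 0)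
include hx ha hroot

lemma disc_pos : 0 < b^2 - 4*a*c := by
  have hB := qA_B_eq hx ha hroot 0
  have hC := qA_C_eq hx ha hroot 0
  have hne := tc_ne hx ha hroot 0
  have hAne : ((qA x a b c 0).1:ℝ) ≠ 0 := Int.cast_ne_zero.mpr (qA_fst_ne_zero hx ha hroot 0)
  have key : ((b^2 - 4*a*c : ℤ) : ℝ)
      = (((qA x a b c 0).1:ℝ) * (mIter x 0 - tc x a b c 0))^2 := by
    have h0 : (qA x a b c 0).2.1 = b := rfl
    have h1 : (qA x a b c 0).1 = a := rfl
    have h2 : (qA x a b c 0).2.2 = c := rfl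
    rw [show ((b^2 - 4*a*c : ℤ) : ℝ) = ((qA x a b c 0).2.1:ℝ)^2
        - 4*((qA x a b c 0).1:ℝ)*((qA x a b c 0).2.2:ℝ) from by rw [h0, h1, h2]; push_cast; ring]
    rw [hB, hC]
    ring
  have hpos : (0:ℝ) < ((b^2 - 4*a*c : ℤ) : ℝ) := by
    rw [key]
    have : ((qA x a b c 0).1:ℝ) * (mIter x 0 - tc x a b c 0) ≠ 0 := mul_ne_zero hAne hne
    positivity
  exact_mod_cast hpos

set_option maxHeartbeats 1000000 in
lemma qA_bounds (n : ℕ) (hX : 1 < mIter x n)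
    (ht0 : 0 < tc x a b c n) (ht1 : tc x a b c n < 1) :
    |(qA x a b c n).1| ≤ (b^2-4*a*c) ∧ |(qA x a b c n).2.1| ≤ 3*(b^2-4*a*c) ∧
      |(qA x a b c n).2.2| ≤ 2*(b^2-4*a*c) := by
  set D : ℤ := b^2 - 4*a*c with hD
  have hDpos : 0 < D := disc_pos hx ha hroot
  have hD1 : (1:ℝ) ≤ (D:ℝ) := by exact_mod_cast hDpos
  set A := ((qA x a b c n).1 : ℝ) with hA
  set X := mIter x n with hXd
  set t := tc x a b c n with htd
  have hBe : ((qA x a b c n).2.1 : ℝ) = -A * (X + t) := qA_B_eq hx ha hroot n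
  have hCe : ((qA x a b c n).2.2 : ℝ) = A * X * t := qA_C_eq hx ha hroot n
  have hAne : A ≠ 0 := Int.cast_ne_zero.mpr (qA_fst_ne_zero hx ha hroot n)
  set α := |A| with hα
  have hαpos : 0 < α := abs_pos.mpr hAne
  have hgap : 0 < X - t := by linarith
  set u := α * (X - t) with hu
  have hu0 : 0 ≤ u := by positivity
  have hdisc : ((qA x a b c n).2.1:ℝ)^2 - 4*A*((qA x a b c n).2.2:ℝ) = (D:ℝ) := by
    have hint : (qA x a b c n).2.1 ^ 2 - 4 * (qA x a b c n).1 * (qA x a b c n).2.2 = D :=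
      (qA_disc (x := x) (a := a) (b := b) (c := c) n).trans hD.symm
    rw [hA]
    exact_mod_cast hint
  have hu2 : u^2 = (D:ℝ) := by
    rw [hu]
    have : (α * (X - t))^2 = (A * (X - t))^2 := by
      rw [mul_pow, mul_pow, sq_abs]
    rw [this, ← hdisc, hBe, hCe]
    ring
  have hu_le : u ≤ (D:ℝ) := by nlinarith [hu2, hD1, hu0]
  -- the integer A+B+C is nonzero
  have hSne : (qA x a b c n).1 + (qA x a b c n).2.1 + (qA x a b c n).2.2 ≠ 0 := by
    intro hzero
    have hzr : ((qA x a b c n).1:ℝ) + ((qA x a b c n).2.1:ℝ) + ((qA x a b c n).2.2:ℝ) = 0 := by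
      exact_mod_cast hzero
    rw [← hA, hBe, hCe] at hzr
    have hfact : A * (1 - X) * (1 - t) = 0 := by linarith [hzr]
    have h1X : 1 - X ≠ 0 := by linarith
    have h1t : 1 - t ≠ 0 := by linarith
    exact (mul_ne_zero (mul_ne_zero hAne h1X) h1t) hfact
  have hS1 : (1:ℝ) ≤ α * ((X - 1) * (1 - t)) := by
    have h1 : (1:ℤ) ≤ |(qA x a b c n).1 + (qA x a b c n).2.1 + (qA x a b c n).2.2| :=
      Int.one_le_abs hSne
    have h2 : (1:ℝ) ≤ |((qA x a b c n).1:ℝ) + ((qA x a b c n).2.1:ℝ) + ((qA x a b c n).2.2:ℝ)| := by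
      exact_mod_cast h1
    rw [← hA] at h2
    have h3 : A + ((qA x a b c n).2.1:ℝ) + ((qA x a b c n).2.2:ℝ) = A * ((1 - X) * (1-t)) := by
      rw [hBe, hCe]; ring
    rw [h3, abs_mul, ← hα] at h2
    have h4 : |(1 - X) * (1 - t)| = (X - 1) * (1 - t) := by
      rw [abs_mul, abs_of_neg (by linarith : (1:ℝ) - X < 0),
        abs_of_pos (by linarith : (0:ℝ) < 1 - t)]
      ring
    rw [h4] at h2
    exact h2
  have e1 : α * (X - 1) ≤ u := by
    rw [hu]
    apply mul_le_mul_of_nonneg_left _ (le_of_lt hαpos)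
    linarith
  have e2 : α * (1 - t) ≤ u := by
    rw [hu]
    apply mul_le_mul_of_nonneg_left _ (le_of_lt hαpos)
    linarith
  have hα_le : α ≤ (D:ℝ) := by
    have c1 : α ≤ (α * (X-1)) * (α * (1-t)) := by nlinarith [hS1, hαpos]
    have c2 : (α * (X-1)) * (α * (1-t)) ≤ u * u := by
      apply mul_le_mul e1 e2 (by nlinarith [hαpos, ht1]) hu0
    nlinarith [hu2]
  have hαt : α * t ≤ α := by nlinarith
  have hBabs : |((qA x a b c n).2.1:ℝ)| = α * (X + t) := by
    rw [hBe, abs_mul, abs_neg, ← hα, abs_of_pos (by linarith : (0:ℝ) < X + t)]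
  have hCabs : |((qA x a b c n).2.2:ℝ)| = α * (X * t) := by
    rw [hCe, mul_assoc, abs_mul, ← hα, abs_of_pos (by nlinarith : (0:ℝ) < X * t)]
  refine ⟨?_, ?_, ?_⟩
  · have : |((qA x a b c n).1:ℝ)| ≤ (D:ℝ) := by rw [← hA, ← hα]; exact hα_le
    exact_mod_cast this
  · have hXt : α*(X+t) = u + 2*(α*t) := by rw [hu]; ring
    have : |((qA x a b c n).2.1:ℝ)| ≤ ((3*D:ℤ):ℝ) := by
      rw [hBabs]
      push_cast
      linarith [hu_le, hα_le, hαt, hXt]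
    exact_mod_cast this
  · have hX0 : (0:ℝ) < X := by linarith
    have hαX : 0 < α * X := mul_pos hαpos hX0
    have h5 : α*(X*t) ≤ α*X := by nlinarith [hαX, ht1]
    have h6 : α*X = u + α*t := by rw [hu]; ring
    have : |((qA x a b c n).2.2:ℝ)| ≤ ((2*D:ℤ):ℝ) := by
      rw [hCabs]
      push_cast
      linarith [hu_le, hα_le, hαt, h5, h6]
    exact_mod_cast this

/-- Lagrange: the minus-CF iterates of a quadratic irrational are eventually periodic. -/
lemma lagrange : ∃ N p : ℕ, 0 < p ∧ ∀ k, mIter x (N + k + p) = mIter x (N + k) := by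
  obtain ⟨K, hK⟩ := eventually_reduced hx ha hroot
  set D : ℤ := b^2 - 4*a*c with hD
  set box : Finset (ℤ × ℤ × ℤ) :=
    Finset.Icc (-D) D ×ˢ Finset.Icc (-(3*D)) (3*D) ×ˢ Finset.Icc (-(2*D)) (2*D) with hbox
  have hmaps : ∀ i ∈ Finset.range (box.card + 1),
      qA x a b c (K + 1 + i) ∈ box := by
    intro i _
    have hX : 1 < mIter x (K + 1 + i) := by
      have : K + 1 + i = (K + i) + 1 := by omega
      rw [this]
      exact one_lt_mIter_succ hx (K + i)
    obtain ⟨h1, h2, h3⟩ := qA_bounds hx ha hroot (K+1+i) hX (hK i).1 (hK i).2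
    rw [hbox]
    rw [Finset.mem_product, Finset.mem_product]
    refine ⟨Finset.mem_Icc.mpr ⟨?_, ?_⟩, Finset.mem_Icc.mpr ⟨?_, ?_⟩, Finset.mem_Icc.mpr ⟨?_, ?_⟩⟩
    · linarith [abs_le.mp h1 |>.1]
    · linarith [abs_le.mp h1 |>.2]
    · linarith [abs_le.mp h2 |>.1]
    · linarith [abs_le.mp h2 |>.2]
    · linarith [abs_le.mp h3 |>.1]
    · linarith [abs_le.mp h3 |>.2]
  have hcard : box.card < (Finset.range (box.card + 1)).card := by
    rw [Finset.card_range]; omega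
  obtain ⟨i, hi, j, hj, hij, heq⟩ :=
    Finset.exists_ne_map_eq_of_card_lt_of_maps_to hcard hmaps
  -- force i < j
  wlog hlt : i < j generalizing i j
  · exact this j hj i hi hij.symm heq.symm (by omega)
  set n1 := K + 1 + i with hn1
  set n2 := K + 1 + j with hn2
  have heq' : qA x a b c n1 = qA x a b c n2 := heq
  -- equal iterates
  have hXeq : mIter x n2 = mIter x n1 := by
    have hfac : ∀ Y : ℝ, ((qA x a b c n1).1:ℝ)*Y^2 + ((qA x a b c n1).2.1:ℝ)*Y
        + ((qA x a b c n1).2.2:ℝ)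
        = ((qA x a b c n1).1:ℝ) * (Y - mIter x n1) * (Y - tc x a b c n1) := by
      intro Y
      rw [qA_B_eq hx ha hroot n1, qA_C_eq hx ha hroot n1]
      ring
    have hroot2 := (qA_spec hx ha hroot n2).2
    rw [← heq'] at hroot2
    rw [hfac (mIter x n2)] at hroot2
    have hAne : ((qA x a b c n1).1:ℝ) ≠ 0 := Int.cast_ne_zero.mpr (qA_fst_ne_zero hx ha hroot n1)
    have hX2 : 1 < mIter x n2 := by
      rw [hn2, show K + 1 + j = (K+j)+1 by omega]
      exact one_lt_mIter_succ hx (K + j)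
    have ht1 : tc x a b c n1 < 1 := (hK i).2
    have hne2 : mIter x n2 - tc x a b c n1 ≠ 0 := by intro h; nlinarith [h]
    have := mul_ne_zero hAne hne2
    rcases mul_eq_zero.mp hroot2 with h | h
    · rcases mul_eq_zero.mp h with h' | h'
      · exact absurd h' hAne
      · linarith [sub_eq_zero.mp h']
    · exact absurd h hne2
  refine ⟨n1, j - i, by omega, ?_⟩
  intro k
  have hstep : n1 + (j - i) = n2 := by omega
  have h1 : n1 + k + (j - i) = (n1 + (j-i)) + k := by omega
  rw [h1, hstep]
  rw [mIter_add x n2 k, mIter_add x n1 k, hXeq]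

end Lagrange2

end MCF

open MCF in
theorem stmt_11 (w v : ℝ) (hw : Irrational w) (hv : Irrational v)
    (aw bw cw : ℤ) (haw : aw ≠ 0)
    (hqw : (aw : ℝ) * w ^ 2 + (bw : ℝ) * w + (cw : ℝ) = 0)
    (av bv cv : ℤ) (hav : av ≠ 0)
    (hqv : (av : ℝ) * v ^ 2 + (bv : ℝ) * v + (cv : ℝ) = 0) :
    (∃ p N M s : ℕ, 0 < p ∧
        (∀ i, mDigit w (N + i + p) = mDigit w (N + i)) ∧
        (∀ i, mDigit v (M + i + p) = mDigit v (M + i)) ∧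
        (∀ i, mDigit v (M + i) = mDigit w (N + s + i))) ↔
      (∃ g : Matrix.SpecialLinearGroup (Fin 2) ℤ,
        v = ((g 0 0 : ℝ) * w + (g 0 1 : ℝ)) / ((g 1 0 : ℝ) * w + (g 1 1 : ℝ))) := by
  constructor
  · rintro ⟨p, N, M, s, hp, hpw, hpv, hmatch⟩
    -- matching digit tails force equal iterates
    have hdig : ∀ i, mDigit (mIter v M) i = mDigit (mIter w (N + s)) i := by
      intro i
      unfold mDigit
      rw [← mIter_add, ← mIter_add]
      exact hmatch i
    have hVW : mIter v M = mIter w (N + s) :=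
      eq_of_digits_eq (irrational_mIter hv M) (irrational_mIter hw (N + s)) hdig
    obtain ⟨h1, hh1⟩ := exists_mb_mIter' hv M
    obtain ⟨h2, hh2⟩ := exists_mb_mIter hw (N + s)
    refine ⟨h1 * h2, ?_⟩
    show v = mb (h1 * h2) w
    rw [mb_mul hw, ← hh2, ← hVW]
    exact hh1
  · rintro ⟨g, hg⟩
    have hgv : v = mb g w := hg
    have hE : E v w := by rw [hgv]; exact E_mb g hw
    obtain ⟨m, n, hmn⟩ := hE
    obtain ⟨K, p, hppos, hper⟩ := lagrange hw haw hqw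
    have hvw : ∀ j, mIter v (m + j) = mIter w (n + j) := by
      intro j
      rw [mIter_add, mIter_add, hmn]
    refine ⟨p, K, m + K, n, hppos, ?_, ?_, ?_⟩
    · intro i
      unfold mDigit
      rw [hper i]
    · intro i
      unfold mDigit
      rw [show m + K + i + p = m + (K + i + p) by omega, hvw,
          show m + K + i = m + (K + i) by omega, hvw,
          show n + (K + i + p) = K + (n + i) + p by omega, hper (n + i),
          show n + (K + i) = K + (n + i) by omega]
    · intro i
      unfold mDigit
      rw [show m + K + i = m + (K + i) by omega, hvw,
          show K + n + i = n + (K + i) by omega]
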